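/- Let G be a graph with self-loops of order n whose eigenvalues are all nonnegative. Then every connected component of G is either an isolated vertex K_1 (no loop) or a complete graph K_r with a loop at every vertex, for some r ≥ 1. -/

import Mathlib

open Matrix Finset

/-- The diagonal 0-1 matrix indicating the loop vertices in `S`. -/
def loopMat (n : ℕ) (S : Finset (Fin n)) : Matrix (Fin n) (Fin n) ℝ :=
  Matrix.of fun i j => if i = j ∧ i ∈ S then 1 else 0

/-- if every eigenvalue of the self-loop graph `G_S` is nonnegative, then every
connected component is either an isolated vertex without a loop, or a complete graph with a
loop at every vertex.  Equivalently: any two distinct vertices in the same component are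
adjacent, and every non-isolated vertex carries a loop. -/
theorem nonneg_eigenvalues_components (n : ℕ) (G : SimpleGraph (Fin n)) [DecidableRel G.Adj]
    (S : Finset (Fin n))
    (hA : (G.adjMatrix ℝ + loopMat n S).IsHermitian)
    (hpos : ∀ i, 0 ≤ hA.eigenvalues i) :
    (∀ u v : Fin n, G.Reachable u v → u ≠ v → G.Adj u v) ∧
    (∀ u v : Fin n, G.Adj u v → u ∈ S) := by
  set A := G.adjMatrix ℝ + loopMat n S with hAdef
  have hPSD : A.PosSemidef := hA.posSemidef_iff_eigenvalues_nonneg.mpr hpos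
  have hquad : ∀ x : Fin n → ℝ, 0 ≤ x ⬝ᵥ A *ᵥ x := by
    intro x
    simpa using hPSD.dotProduct_mulVec_nonneg x
  have hentry : ∀ i j, A i j = (if G.Adj i j then 1 else 0) + (if i = j ∧ i ∈ S then 1 else 0) := by
    intro i j; simp [hAdef, loopMat, Matrix.add_apply]
  have loops : ∀ u v : Fin n, G.Adj u v → u ∈ S := by
    intro u v hadj
    by_contra hu
    have h := hquad (Pi.single u 1 + Pi.single v (-1))
    simp only [dotProduct_add, add_dotProduct, mulVec_add, mulVec_single,
      single_dotProduct, Pi.single_apply, Pi.smul_apply, MulOpposite.smul_eq_mul_unop,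
      MulOpposite.unop_op, Matrix.col_apply] at h
    rw [hentry u u, hentry u v, hentry v u, hentry v v] at h
    have hvu : G.Adj v u := hadj.symm
    by_cases hv : v ∈ S <;>
      simp only [hadj, hvu, hadj.ne, hadj.ne', hu, hv, G.loopless, if_true, if_false,
        and_true, and_false, if_neg, ite_true, ite_false, and_self,
        SimpleGraph.irrefl, if_pos] at h <;>
      · norm_num at h
        try linarith
  refine ⟨?_, loops⟩
  have tri : ∀ u v w : Fin n, G.Adj u v → G.Adj v w → u ≠ w → G.Adj u w := by
    intro u v w huv hvw huw
    by_contra hadj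
    have h := hquad (Pi.single u 1 + (Pi.single v (-1) + Pi.single w 1))
    simp only [dotProduct_add, add_dotProduct, mulVec_add, mulVec_single,
      single_dotProduct, Pi.single_apply, Pi.smul_apply, MulOpposite.smul_eq_mul_unop,
      MulOpposite.unop_op, Matrix.col_apply] at h
    rw [hentry u u, hentry u v, hentry u w, hentry v u, hentry v v, hentry v w,
      hentry w u, hentry w v, hentry w w] at h
    have hSu : u ∈ S := loops u v huv
    have hSv : v ∈ S := loops v w hvw
    have hSw : w ∈ S := loops w v hvw.symm
    have hwu : ¬ G.Adj w u := fun hc => hadj hc.symm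
    simp only [huv, hvw, huv.symm, hvw.symm, huv.ne, hvw.ne, huv.ne', hvw.ne', huw, huw.symm,
      hadj, hwu, hSu, hSv, hSw, and_true, and_self, ite_true, ite_false,
      if_pos rfl, SimpleGraph.irrefl] at h
    norm_num at h
  have main : ∀ a b : Fin n, G.Walk a b → a ≠ b → G.Adj a b := by
    intro a b p
    induction p with
    | nil => intro h; exact absurd rfl h
    | @cons a c b h p ih =>
      intro hab
      by_cases hcb : c = b
      · exact hcb ▸ h
      · exact tri a c b h (ih hcb) hab
  intro u v hr huv
  obtain ⟨p⟩ := hr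
  exact main u v p huv
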